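/- Let f be a polynomial with integer coefficients, let n₀ be a natural number, and let S be a finite set of prime numbers. Suppose that for every natural number n ≥ n₀ the value f(n) is nonzero and every prime dividing f(n) belongs to S (equivalently, f(n) = ± a product of powers of the primes in S). Then f is a constant polynomial. -/

import Mathlib

open Polynomial

/-- If `f ∈ ℤ[X]` is such that for every natural number `n ≥ n₀` the value
`f(n)` is nonzero and all its prime divisors lie in a fixed finite set `S` of primes, then
`f` is constant (has natural degree `0`). -/
theorem natDegree_eq_zero_of_prime_divisors_finite (f : Polynomial ℤ) (n₀ : ℕ) (S : Finset ℕ)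
    (hS : ∀ q ∈ S, Nat.Prime q)
    (hval : ∀ n : ℕ, n₀ ≤ n → f.eval (n : ℤ) ≠ 0 ∧
      ∀ q : ℕ, q.Prime → (q : ℤ) ∣ f.eval (n : ℤ) → q ∈ S) :
    f.natDegree = 0 := by
  set c : ℤ := f.eval (n₀ : ℤ) with hc
  have hc0 : c ≠ 0 := (hval n₀ le_rfl).1
  set Q : ℤ := ∏ q ∈ S, (q : ℤ) with hQ
  have hQ0 : Q ≠ 0 := by
    refine Finset.prod_ne_zero_iff.mpr fun q hq => ?_
    exact_mod_cast (hS q hq).ne_zero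
  set m : ℤ := c * Q with hm
  have hm0 : m ≠ 0 := mul_ne_zero hc0 hQ0
  have hM0 : 0 < (m ^ 2).natAbs := Int.natAbs_pos.mpr (pow_ne_zero 2 hm0)
  set N : ℕ → ℕ := fun t => n₀ + t * (m ^ 2).natAbs with hN
  have hNle : ∀ t, n₀ ≤ N t := fun t => Nat.le_add_right _ _
  -- key decomposition: f(N t) = c * (1 + c * Q^2 * w)
  have key : ∀ t : ℕ, ∃ w : ℤ, f.eval ((N t : ℕ) : ℤ) = c * (1 + c * Q ^ 2 * w) := by
    intro t
    have hdvd : (m ^ 2 : ℤ) ∣ f.eval ((N t : ℕ) : ℤ) - c := by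
      refine dvd_trans ?_ (sub_dvd_eval_sub ((N t : ℕ) : ℤ) (n₀ : ℤ) f)
      have : ((N t : ℕ) : ℤ) - (n₀ : ℤ) = (t : ℤ) * ((m ^ 2).natAbs : ℤ) := by
        simp only [hN]; push_cast; ring
      rw [this, Int.natCast_natAbs, abs_of_nonneg (sq_nonneg m)]
      exact Dvd.dvd.mul_left dvd_rfl _
    obtain ⟨w, hw⟩ := hdvd
    refine ⟨w, ?_⟩
    have : f.eval ((N t : ℕ) : ℤ) = c + m ^ 2 * w := by linarith
    rw [this, hm]; ring
  by_cases hcase : ∃ t : ℕ, f.eval ((N t : ℕ) : ℤ) ≠ c ∧ f.eval ((N t : ℕ) : ℤ) ≠ -c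
  · -- derive a contradiction: a prime outside S divides f(N t)
    exfalso
    obtain ⟨t, ht1, ht2⟩ := hcase
    obtain ⟨w, hw⟩ := key t
    set u : ℤ := 1 + c * Q ^ 2 * w with hu
    have hu0 : u ≠ 0 := by
      intro h; exact (hval (N t) (hNle t)).1 (by rw [hw, h, mul_zero])
    have hu1 : u ≠ 1 := by intro h; apply ht1; rw [hw, h, mul_one]
    have hun1 : u ≠ -1 := by intro h; apply ht2; rw [hw, h]; ring
    have h2 : 2 ≤ u.natAbs := by
      rcases Nat.lt_or_ge u.natAbs 2 with h | h
      · interval_cases h' : u.natAbs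
        · exact absurd (Int.natAbs_eq_zero.mp h') hu0
        · rcases Int.natAbs_eq_iff.mp h' with h | h
          · exact absurd (by simpa using h) hu1
          · exact absurd (by simpa using h) hun1
      · exact h
    set p : ℕ := u.natAbs.minFac with hp
    have hpp : p.Prime := Nat.minFac_prime (by omega)
    have hpu : (p : ℤ) ∣ u := by
      rw [← Int.natAbs_dvd_natAbs]
      simpa using Nat.minFac_dvd u.natAbs
    have hpf : (p : ℤ) ∣ f.eval ((N t : ℕ) : ℤ) := by
      rw [hw]; exact Dvd.dvd.mul_left hpu c
    have hpS : p ∈ S := (hval (N t) (hNle t)).2 p hpp hpf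
    have hpQ : (p : ℤ) ∣ Q := Finset.dvd_prod_of_mem _ hpS
    have hp1 : (p : ℤ) ∣ 1 := by
      have : (p : ℤ) ∣ c * Q ^ 2 * w := ((dvd_pow hpQ two_ne_zero).mul_left c).mul_right w
      have := dvd_sub hpu this
      simpa [hu] using this
    have := Int.le_of_dvd one_pos hp1
    have := hpp.two_le
    omega
  · -- all values are ±c: f is a constant polynomial
    push_neg at hcase
    have hor : ∀ t : ℕ, f.eval ((N t : ℕ) : ℤ) = c ∨ f.eval ((N t : ℕ) : ℤ) = -c := by
      intro t
      by_cases h : f.eval ((N t : ℕ) : ℤ) = c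
      · exact Or.inl h
      · exact Or.inr (hcase t h)
    have hNinj : Function.Injective fun t : ℕ => ((N t : ℕ) : ℤ) := by
      intro a b hab
      simp only [hN] at hab
      have : a * (m ^ 2).natAbs = b * (m ^ 2).natAbs := by exact_mod_cast by omega
      exact Nat.eq_of_mul_eq_mul_right hM0 this
    have hset : {t : ℕ | f.eval ((N t : ℕ) : ℤ) = c}.Infinite ∨
        {t : ℕ | f.eval ((N t : ℕ) : ℤ) = -c}.Infinite := by
      by_contra h
      push_neg at h
      try rw [Set.not_infinite, Set.not_infinite] at h
      have : (Set.univ : Set ℕ).Finite := by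
        have := h.1.union h.2
        refine this.subset fun t _ => ?_
        rcases hor t with h' | h'
        · exact Or.inl h'
        · exact Or.inr h'
      exact Set.infinite_univ this
    rcases hset with h | h
    · have hz : f - C c = 0 := by
        by_contra hne
        refine Polynomial.finite_setOf_isRoot hne |>.not_infinite ?_
        refine Set.Infinite.mono ?_ (h.image (Set.injOn_of_injective hNinj))
        rintro x ⟨t, ht, rfl⟩
        simp only [Set.mem_setOf_eq] at ht
        simp [IsRoot, sub_eq_zero, ht]
      have : f = C c := by linear_combination (norm := ring_nf) hz
      rw [this, natDegree_C]
    · have hz : f - C (-c) = 0 := by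
        by_contra hne
        refine Polynomial.finite_setOf_isRoot hne |>.not_infinite ?_
        refine Set.Infinite.mono ?_ (h.image (Set.injOn_of_injective hNinj))
        rintro x ⟨t, ht, rfl⟩
        simp only [Set.mem_setOf_eq] at ht
        simp [IsRoot, sub_eq_zero, ht]
      have : f = C (-c) := by linear_combination (norm := ring_nf) hz
      rw [this, natDegree_C]
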